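/- Let E be a finite-dimensional real inner product space, ρ a norm on E, and D = {x ∈ E : ρ°(x) ≤ 1}. If x₀ ∉ D and D is strictly convex (every boundary point of D is an extreme point of D), then x ↦ ρ(x₀ − x) admits a unique minimizer over D. -/

import Mathlib

/-- Dual norm `ρ°(y) = max {x·y : x ∈ E, ρ(x) ≤ 1}` of a norm `ρ` on a real inner
product space `E`. -/
noncomputable def dualNorm {E : Type*} [NormedAddCommGroup E] [InnerProductSpace ℝ E]
    (ρ : E → ℝ) (y : E) : ℝ :=
  sSup {r : ℝ | ∃ x : E, ρ x ≤ 1 ∧ r = (inner ℝ x y : ℝ)}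

/-- Let `E` be a finite-dimensional real inner product space, `ρ` a
norm on `E`, and `D = {x : ρ°(x) ≤ 1}`. If `x₀ ∉ D` and `D` is strictly convex
(every boundary point of `D` is an extreme point of `D`, where `x ∈ Ω` is extreme if
`2x = x₁ + x₂` with `x₁, x₂ ∈ Ω` implies `x = x₁ = x₂`), then `x ↦ ρ(x₀ − x)` admits
a unique minimizer over `D`. -/
theorem stmt_11 {E : Type*} [NormedAddCommGroup E] [InnerProductSpace ℝ E]
    [FiniteDimensional ℝ E]
    (ρ : E → ℝ)
    (hρ_add : ∀ x y, ρ (x + y) ≤ ρ x + ρ y)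
    (hρ_smul : ∀ (c : ℝ) (x : E), ρ (c • x) = |c| * ρ x)
    (hρ_def : ∀ x, ρ x = 0 → x = 0)
    (x₀ : E) (hx₀ : ¬ dualNorm ρ x₀ ≤ 1)
    (hsc : ∀ x ∈ frontier {y : E | dualNorm ρ y ≤ 1},
      dualNorm ρ x ≤ 1 ∧
        ∀ x₁ : E, dualNorm ρ x₁ ≤ 1 → ∀ x₂ : E, dualNorm ρ x₂ ≤ 1 →
          (2 : ℝ) • x = x₁ + x₂ → x = x₁ ∧ x = x₂) :
    ∃! x : E, dualNorm ρ x ≤ 1 ∧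
      ∀ z : E, dualNorm ρ z ≤ 1 → ρ (x₀ - x) ≤ ρ (x₀ - z) := by
  -- basic facts about ρ
  have hρ0 : ρ 0 = 0 := by simpa using hρ_smul 0 0
  have hρ_neg : ∀ x, ρ (-x) = ρ x := by
    intro x
    have := hρ_smul (-1) x
    simpa using this
  have hρ_nonneg : ∀ x, 0 ≤ ρ x := by
    intro x
    have h1 : ρ (x + -x) ≤ ρ x + ρ (-x) := hρ_add x (-x)
    rw [add_neg_cancel, hρ0, hρ_neg] at h1
    linarith
  -- convexity and continuity of ρ
  have hconv : ConvexOn ℝ Set.univ ρ := by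
    refine ⟨convex_univ, ?_⟩
    intro x _ y _ a b ha hb _
    calc ρ (a • x + b • y) ≤ ρ (a • x) + ρ (b • y) := hρ_add _ _
      _ = a * ρ x + b * ρ y := by
          rw [hρ_smul, hρ_smul, abs_of_nonneg ha, abs_of_nonneg hb]
  have hcont : Continuous ρ := by
    exact continuousOn_univ.mp (hconv.continuousOn isOpen_univ)
  -- x₀ ≠ 0, hence E is nontrivial
  have hS0 : dualNorm ρ 0 ≤ 1 := by
    have hset : {r : ℝ | ∃ x : E, ρ x ≤ 1 ∧ r = (inner ℝ x (0 : E) : ℝ)} = {0} := by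
      ext r
      simp only [Set.mem_setOf_eq, Set.mem_singleton_iff, inner_zero_right]
      constructor
      · rintro ⟨x, -, rfl⟩; rfl
      · rintro rfl; exact ⟨0, by simp [hρ0], rfl⟩
    rw [dualNorm, hset, csSup_singleton]
    norm_num
  have hx₀ne : x₀ ≠ 0 := by rintro rfl; exact hx₀ hS0
  have : Nontrivial E := nontrivial_of_ne x₀ 0 hx₀ne
  -- upper bound: ρ x ≤ C * ‖x‖
  obtain ⟨δ, hδpos, hδ⟩ : ∃ δ > 0, ∀ x : E, ‖x‖ < δ → ρ x < 1 := by
    have h := Metric.continuous_iff.mp hcont 0 1 one_pos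
    obtain ⟨δ, hδpos, hδ⟩ := h
    refine ⟨δ, hδpos, fun x hx => ?_⟩
    have := hδ x (by simpa [dist_eq_norm] using hx)
    rw [hρ0] at this
    calc ρ x = |ρ x - 0| := by rw [abs_of_nonneg (by simpa using hρ_nonneg x)]; ring
      _ < 1 := by simpa [Real.dist_eq] using this
  set C : ℝ := 2 / δ with hC
  have hCpos : 0 < C := by positivity
  have hupper : ∀ x : E, ρ x ≤ C * ‖x‖ := by
    intro x
    rcases eq_or_ne x 0 with rfl | hx
    · simp [hρ0]
    · have hnx : (0:ℝ) < ‖x‖ := norm_pos_iff.mpr hx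
      have h1 : ρ ((δ / (2 * ‖x‖)) • x) < 1 := by
        apply hδ
        rw [norm_smul, Real.norm_eq_abs, abs_of_pos (by positivity)]
        rw [div_mul_eq_mul_div, mul_comm]
        rw [div_lt_iff₀ (by positivity)]
        nlinarith
      rw [hρ_smul, abs_of_pos (by positivity)] at h1
      rw [div_mul_eq_mul_div, div_lt_one (by positivity)] at h1
      have : ρ x ≤ 2 * ‖x‖ / δ := by
        rw [le_div_iff₀ hδpos]; nlinarith
      calc ρ x ≤ 2 * ‖x‖ / δ := this
        _ = C * ‖x‖ := by rw [hC]; ring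
  -- lower bound: c * ‖x‖ ≤ ρ x
  obtain ⟨u, hu, humin⟩ :=
    (isCompact_sphere (0:E) 1).exists_isMinOn (NormedSpace.sphere_nonempty.mpr zero_le_one)
      hcont.continuousOn
  have hune : u ≠ 0 := by
    intro h
    have := mem_sphere_zero_iff_norm.mp hu
    rw [h] at this; simp at this
  set c : ℝ := ρ u with hc
  have hcpos : 0 < c := lt_of_le_of_ne (hρ_nonneg u) (fun h => hune (hρ_def u h.symm))
  have hlower : ∀ x : E, c * ‖x‖ ≤ ρ x := by
    intro x
    rcases eq_or_ne x 0 with rfl | hx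
    · simp [hρ0]
    · have hnx : (0:ℝ) < ‖x‖ := norm_pos_iff.mpr hx
      have hmem : ‖x‖⁻¹ • x ∈ Metric.sphere (0:E) 1 := by
        simp [norm_smul, abs_of_pos (inv_pos.mpr hnx), inv_mul_cancel₀ hnx.ne']
      have h2 : ρ u ≤ ρ (‖x‖⁻¹ • x) := humin hmem
      rw [hρ_smul, abs_of_pos (inv_pos.mpr hnx)] at h2
      have : c ≤ ‖x‖⁻¹ * ρ x := h2
      calc c * ‖x‖ ≤ (‖x‖⁻¹ * ρ x) * ‖x‖ := by nlinarith
        _ = ρ x := by field_simp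
  -- the defining set of dualNorm: nonempty and bounded above
  have hSne : ∀ y : E, {r : ℝ | ∃ x : E, ρ x ≤ 1 ∧ r = (inner ℝ x y : ℝ)}.Nonempty :=
    fun y => ⟨(inner ℝ (0:E) y : ℝ), 0, by simp [hρ0], rfl⟩
  have hSbdd : ∀ y : E, BddAbove {r : ℝ | ∃ x : E, ρ x ≤ 1 ∧ r = (inner ℝ x y : ℝ)} := by
    intro y
    refine ⟨(1/c) * ‖y‖, ?_⟩
    rintro r ⟨x, hx, rfl⟩
    have h1 : ‖x‖ ≤ 1/c := (le_div_iff₀ hcpos).mpr (by linarith [hlower x, mul_comm c ‖x‖])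
    calc (inner ℝ x y : ℝ) ≤ ‖x‖ * ‖y‖ := real_inner_le_norm x y
      _ ≤ (1/c) * ‖y‖ := mul_le_mul_of_nonneg_right h1 (norm_nonneg y)
  -- characterization of membership in D
  have hD : ∀ y : E, dualNorm ρ y ≤ 1 ↔ ∀ x : E, ρ x ≤ 1 → (inner ℝ x y : ℝ) ≤ 1 := by
    intro y
    constructor
    · intro h x hx
      exact le_trans (le_csSup (hSbdd y) ⟨x, hx, rfl⟩) h
    · intro h
      exact csSup_le (hSne y) (by rintro r ⟨x, hx, rfl⟩; exact h x hx)
  set D : Set E := {y : E | dualNorm ρ y ≤ 1} with hDdef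
  -- D is closed
  have hDclosed : IsClosed D := by
    have heq : D = ⋂ x ∈ {x : E | ρ x ≤ 1}, {y : E | (inner ℝ x y : ℝ) ≤ 1} := by
      ext y
      simp only [hDdef, Set.mem_setOf_eq, Set.mem_iInter, hD y]
    rw [heq]
    exact isClosed_biInter fun x _ =>
      isClosed_le (Continuous.inner continuous_const continuous_id) continuous_const
  -- D is bounded
  have hDbdd : ∀ y ∈ D, ‖y‖ ≤ C := by
    intro y hy
    rcases eq_or_ne y 0 with rfl | hyne
    · simp [hCpos.le]
    · have hny : (0:ℝ) < ‖y‖ := norm_pos_iff.mpr hyne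
      have hρy : 0 < ρ y := lt_of_le_of_ne (hρ_nonneg y) (fun h => hyne (hρ_def y h.symm))
      have hmem : ρ ((ρ y)⁻¹ • y) ≤ 1 := by
        rw [hρ_smul, abs_of_pos (inv_pos.mpr hρy), inv_mul_cancel₀ hρy.ne']
      have h1 : (inner ℝ ((ρ y)⁻¹ • y) y : ℝ) ≤ 1 := (hD y).mp hy _ hmem
      rw [real_inner_smul_left, real_inner_self_eq_norm_sq] at h1
      have h2 : ‖y‖ ^ 2 ≤ ρ y := by
        rw [inv_mul_le_iff₀ hρy, mul_one] at h1
        nlinarith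
      have h3 : ρ y ≤ C * ‖y‖ := hupper y
      nlinarith
  -- D is compact
  have hDcompact : IsCompact D := by
    apply Metric.isCompact_of_isClosed_isBounded hDclosed
    exact (Metric.isBounded_iff_subset_closedBall 0).mpr
      ⟨C, fun y hy => by simpa [Metric.mem_closedBall, dist_eq_norm] using hDbdd y hy⟩
  -- existence of a minimizer
  obtain ⟨xm, hxmD, hxmmin⟩ := hDcompact.exists_isMinOn ⟨0, hS0⟩
    ((hcont.comp (continuous_const.sub continuous_id)).continuousOn :
      ContinuousOn (fun z => ρ (x₀ - z)) D)
  have hxm : dualNorm ρ xm ≤ 1 ∧ ∀ z : E, dualNorm ρ z ≤ 1 → ρ (x₀ - xm) ≤ ρ (x₀ - z) :=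
    ⟨hxmD, fun z hz => hxmmin hz⟩
  -- any two minimizers coincide
  have key : ∀ x₁ : E, (dualNorm ρ x₁ ≤ 1 ∧ ∀ z : E, dualNorm ρ z ≤ 1 →
        ρ (x₀ - x₁) ≤ ρ (x₀ - z)) →
      ∀ x₂ : E, (dualNorm ρ x₂ ≤ 1 ∧ ∀ z : E, dualNorm ρ z ≤ 1 →
        ρ (x₀ - x₂) ≤ ρ (x₀ - z)) → x₁ = x₂ := by
    rintro x₁ ⟨h₁D, h₁min⟩ x₂ ⟨h₂D, h₂min⟩
    set m : ℝ := ρ (x₀ - x₁) with hm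
    have hm2 : ρ (x₀ - x₂) = m := le_antisymm (h₂min x₁ h₁D) (h₁min x₂ h₂D)
    have hmpos : 0 < m := by
      rcases lt_or_eq_of_le (hρ_nonneg (x₀ - x₁)) with h | h
      · exact h
      · exact absurd ((hD x₀).mpr fun v hv => by
          have hx1 : x₀ = x₁ := sub_eq_zero.mp (hρ_def _ h.symm)
          exact hx1 ▸ (hD x₁).mp h₁D v hv) hx₀
    set x : E := (2:ℝ)⁻¹ • (x₁ + x₂) with hxdef
    have hxD : dualNorm ρ x ≤ 1 := by
      rw [hD]
      intro v hv
      have h1 := (hD x₁).mp h₁D v hv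
      have h2 := (hD x₂).mp h₂D v hv
      rw [hxdef, real_inner_smul_right, inner_add_right]
      linarith
    have hxsub : x₀ - x = (2:ℝ)⁻¹ • ((x₀ - x₁) + (x₀ - x₂)) := by
      rw [hxdef]; module
    have hxle : ρ (x₀ - x) ≤ m := by
      rw [hxsub]
      calc ρ ((2:ℝ)⁻¹ • ((x₀ - x₁) + (x₀ - x₂)))
          = |(2:ℝ)⁻¹| * ρ ((x₀ - x₁) + (x₀ - x₂)) := hρ_smul _ _
        _ ≤ |(2:ℝ)⁻¹| * (ρ (x₀ - x₁) + ρ (x₀ - x₂)) := by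
            have := hρ_add (x₀ - x₁) (x₀ - x₂)
            have h0 : (0:ℝ) ≤ |(2:ℝ)⁻¹| := abs_nonneg _
            nlinarith
        _ = m := by rw [← hm, hm2, abs_of_pos (by norm_num : (0:ℝ) < (2:ℝ)⁻¹)]; ring
    have hxeq : ρ (x₀ - x) = m := le_antisymm hxle (h₁min x hxD)
    have hx₀x : x₀ ≠ x := by
      intro h
      rw [← h, sub_self, hρ0] at hxeq
      linarith
    -- x is not in the interior of D
    have hnotint : x ∉ interior D := by
      intro hint
      obtain ⟨ε, hεpos, hball⟩ := Metric.isOpen_iff.mp isOpen_interior x hint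
      have hnxx : (0:ℝ) < ‖x₀ - x‖ := norm_pos_iff.mpr (sub_ne_zero.mpr hx₀x)
      set t : ℝ := min (1/2) (ε / (2 * ‖x₀ - x‖)) with ht
      have htpos : 0 < t := lt_min (by norm_num) (by positivity)
      have htle : t ≤ 1/2 := min_le_left _ _
      set x' : E := x + t • (x₀ - x) with hx'
      have hx'D : x' ∈ D := by
        apply interior_subset
        apply hball
        rw [Metric.mem_ball, dist_eq_norm, hx']
        have : x + t • (x₀ - x) - x = t • (x₀ - x) := by abel
        rw [this, norm_smul, Real.norm_eq_abs, abs_of_pos htpos]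
        have h1 : t ≤ ε / (2 * ‖x₀ - x‖) := min_le_right _ _
        calc t * ‖x₀ - x‖ ≤ (ε / (2 * ‖x₀ - x‖)) * ‖x₀ - x‖ := by nlinarith
          _ = ε / 2 := by field_simp
          _ < ε := by linarith
      have hx'sub : x₀ - x' = (1 - t) • (x₀ - x) := by rw [hx']; module
      have hρx' : ρ (x₀ - x') = (1 - t) * m := by
        rw [hx'sub, hρ_smul, abs_of_pos (by linarith : (0:ℝ) < 1 - t), hxeq]
      have h4 := h₁min x' hx'D
      rw [hρx'] at h4
      nlinarith
    -- x is a frontier point; apply strict convexity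
    have hfr : x ∈ frontier D := ⟨subset_closure hxD, hnotint⟩
    obtain ⟨-, hext⟩ := hsc x hfr
    have h2x : (2:ℝ) • x = x₁ + x₂ := by rw [hxdef]; module
    obtain ⟨he1, he2⟩ := hext x₁ h₁D x₂ h₂D h2x
    rw [← he1, ← he2]
  exact ⟨xm, hxm, fun y hy => key y hy xm hxm⟩
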